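/- Let $E$ be an infinite dimensional Banach space with modulus of asymptotic uniform smoothness $\overline{\rho}_E$. If $(x_\alpha)$ is a net contained in a compact subset of the closed unit ball $B_E$ and $(w_\alpha)$ is a bounded weakly null net in $E$ (indexed by the same directed set), then $\limsup_\alpha\|x_\alpha+w_\alpha\|\le 1+\overline{\rho}_E(\limsup_\alpha\|w_\alpha\|)$. -/

import Mathlib

open Filter

/-- Modulus of asymptotic pointwise smoothness of `E` at `x` for parameter `t`. -/
noncomputable def asympRhoPt (E : Type*) [NormedAddCommGroup E] [NormedSpace ℝ E]
    (t : ℝ) (x : E) : ℝ :=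
  sInf { r | ∃ H : Submodule ℝ E, IsClosed (H : Set E) ∧ FiniteDimensional ℝ (E ⧸ H) ∧
    r = sSup {s | ∃ h ∈ H, ‖h‖ ≤ t ∧ s = ‖x + h‖} - 1 }

/-- Modulus of asymptotic uniform smoothness of `E`. -/
noncomputable def asympRho (E : Type*) [NormedAddCommGroup E] [NormedSpace ℝ E]
    (t : ℝ) : ℝ :=
  sSup { r | ∃ x : E, ‖x‖ = 1 ∧ r = asympRhoPt E t x }

section Aux

variable {E : Type*} [NormedAddCommGroup E] [NormedSpace ℝ E]

lemma key_proj {ι : Type*} [Preorder ι] (H : Submodule ℝ E) (hc : IsClosed (H : Set E))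
    (hfd : FiniteDimensional ℝ (E ⧸ H)) (w : ι → E)
    (hwnull : ∀ f : E →L[ℝ] ℝ, Tendsto (fun α => f (w α)) atTop (nhds 0)) :
    ∃ g : ι → E, (∀ α, w α - g α ∈ H) ∧ Tendsto g atTop (nhds 0) := by
  haveI := hc
  haveI := hfd
  obtain ⟨σ, hσ⟩ := H.mkQ.exists_rightInverse_of_surjective (by rw [Submodule.range_mkQ])
  let πL : E →L[ℝ] E ⧸ H :=
    H.mkQ.mkContinuous 1 (fun v => by simpa using Submodule.Quotient.norm_mk_le H v)
  let b := Module.Free.chooseBasis ℝ (E ⧸ H)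
  let F : Module.Free.ChooseBasisIndex ℝ (E ⧸ H) → (E →L[ℝ] ℝ) := fun j =>
    (LinearMap.toContinuousLinearMap (b.coord j)).comp πL
  refine ⟨fun α => σ (H.mkQ (w α)), fun α => ?_, ?_⟩
  · rw [← Submodule.Quotient.mk_eq_zero H]
    have : H.mkQ (w α - σ (H.mkQ (w α))) = 0 := by
      rw [map_sub]
      have := LinearMap.congr_fun hσ (H.mkQ (w α))
      simp only [LinearMap.comp_apply, LinearMap.id_apply] at this
      rw [this, sub_self]
    simpa using this
  · have hgeq : ∀ α, σ (H.mkQ (w α)) = ∑ j, F j (w α) • σ (b j) := by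
      intro α
      conv_lhs => rw [← b.sum_repr (H.mkQ (w α))]
      rw [map_sum]
      refine Finset.sum_congr rfl fun j _ => ?_
      rw [map_smul]
      rfl
    have htend : Tendsto (fun α => ∑ j, F j (w α) • σ (b j)) atTop (nhds 0) := by
      have h0 : (0 : E) = ∑ j, (0 : ℝ) • σ (b j) := by simp
      rw [h0]
      exact tendsto_finset_sum _ fun j _ => (hwnull (F j)).smul_const _
    exact htend.congr fun α => (hgeq α).symm

lemma bddAbove_set1 {t : ℝ} (x : E) (H : Submodule ℝ E) :
    BddAbove {s | ∃ h ∈ H, ‖h‖ ≤ t ∧ s = ‖x + h‖} := by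
  refine ⟨‖x‖ + t, fun s hs => ?_⟩
  obtain ⟨h, _, hht, rfl⟩ := hs
  calc ‖x + h‖ ≤ ‖x‖ + ‖h‖ := norm_add_le _ _
    _ ≤ ‖x‖ + t := by linarith

lemma mem_set1 {t : ℝ} (ht : 0 ≤ t) (x : E) (H : Submodule ℝ E) :
    ‖x‖ ∈ {s | ∃ h ∈ H, ‖h‖ ≤ t ∧ s = ‖x + h‖} :=
  ⟨0, H.zero_mem, by simpa using ht, by simp⟩

lemma quot_top_fd : FiniteDimensional ℝ (E ⧸ (⊤ : Submodule ℝ E)) := by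
  haveI : Subsingleton (E ⧸ (⊤ : Submodule ℝ E)) :=
    Submodule.Quotient.subsingleton_iff.mpr rfl
  infer_instance

lemma set2_nonempty {t : ℝ} (x : E) :
    { r | ∃ H : Submodule ℝ E, IsClosed (H : Set E) ∧ FiniteDimensional ℝ (E ⧸ H) ∧
      r = sSup {s | ∃ h ∈ H, ‖h‖ ≤ t ∧ s = ‖x + h‖} - 1 }.Nonempty :=
  ⟨_, ⊤, by rw [Submodule.top_coe]; exact isClosed_univ, quot_top_fd, rfl⟩

lemma set2_bddBelow {t : ℝ} (ht : 0 ≤ t) {x : E} (hx : ‖x‖ = 1) :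
    BddBelow { r | ∃ H : Submodule ℝ E, IsClosed (H : Set E) ∧ FiniteDimensional ℝ (E ⧸ H) ∧
      r = sSup {s | ∃ h ∈ H, ‖h‖ ≤ t ∧ s = ‖x + h‖} - 1 } := by
  refine ⟨0, fun r hr => ?_⟩
  obtain ⟨H, _, _, rfl⟩ := hr
  have h1 : ‖x‖ ≤ sSup {s | ∃ h ∈ H, ‖h‖ ≤ t ∧ s = ‖x + h‖} :=
    le_csSup (bddAbove_set1 x H) (mem_set1 ht x H)
  rw [hx] at h1; linarith

lemma asympRhoPt_le {t : ℝ} (ht : 0 ≤ t) {x : E} (hx : ‖x‖ = 1) : asympRhoPt E t x ≤ t := by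
  have h1 : asympRhoPt E t x ≤
      sSup {s | ∃ h ∈ (⊤ : Submodule ℝ E), ‖h‖ ≤ t ∧ s = ‖x + h‖} - 1 :=
    csInf_le (set2_bddBelow ht hx)
      ⟨⊤, by rw [Submodule.top_coe]; exact isClosed_univ, quot_top_fd, rfl⟩
  have h2 : sSup {s | ∃ h ∈ (⊤ : Submodule ℝ E), ‖h‖ ≤ t ∧ s = ‖x + h‖} ≤ ‖x‖ + t := by
    refine csSup_le ⟨‖x‖, mem_set1 ht x ⊤⟩ fun s hs => ?_
    obtain ⟨h, _, hht, rfl⟩ := hs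
    calc ‖x + h‖ ≤ ‖x‖ + ‖h‖ := norm_add_le _ _
      _ ≤ ‖x‖ + t := by linarith
  rw [hx] at h2; linarith

lemma asympRhoPt_le_asympRho {t : ℝ} (ht : 0 ≤ t) {x : E} (hx : ‖x‖ = 1) :
    asympRhoPt E t x ≤ asympRho E t := by
  refine le_csSup ⟨t, fun r hr => ?_⟩ ⟨x, hx, rfl⟩
  obtain ⟨y, hy, rfl⟩ := hr
  exact asympRhoPt_le ht hy

lemma exists_H {t ε : ℝ} (ht : 0 ≤ t) (hε : 0 < ε) {v : E} (hv : ‖v‖ = 1) :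
    ∃ H : Submodule ℝ E, IsClosed (H : Set E) ∧ FiniteDimensional ℝ (E ⧸ H) ∧
      ∀ h ∈ H, ‖h‖ ≤ t → ‖v + h‖ ≤ 1 + asympRho E t + ε := by
  obtain ⟨r, hrS, hrlt⟩ := Real.lt_sInf_add_pos (set2_nonempty (t := t) (x := v)) hε
  obtain ⟨H, hHc, hHfd, rfl⟩ := hrS
  refine ⟨H, hHc, hHfd, fun h hh hht => ?_⟩
  have h2 : ‖v + h‖ ≤ sSup {s | ∃ h ∈ H, ‖h‖ ≤ t ∧ s = ‖v + h‖} :=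
    le_csSup (bddAbove_set1 v H) ⟨h, hh, hht, rfl⟩
  have h3 := asympRhoPt_le_asympRho ht hv
  have h4 : sInf { r | ∃ H : Submodule ℝ E, IsClosed (H : Set E) ∧
      FiniteDimensional ℝ (E ⧸ H) ∧
      r = sSup {s | ∃ h ∈ H, ‖h‖ ≤ t ∧ s = ‖v + h‖} - 1 } = asympRhoPt E t v := rfl
  rw [h4] at hrlt
  linarith

lemma fd_quot_inf (A B : Submodule ℝ E) (hA : FiniteDimensional ℝ (E ⧸ A))
    (hB : FiniteDimensional ℝ (E ⧸ B)) : FiniteDimensional ℝ (E ⧸ (A ⊓ B)) := by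
  haveI := hA; haveI := hB
  have hker : LinearMap.ker (A.mkQ.prod B.mkQ) = A ⊓ B := by
    rw [LinearMap.ker_prod, Submodule.ker_mkQ, Submodule.ker_mkQ]
  have e := (A.mkQ.prod B.mkQ).quotKerEquivRange
  haveI : FiniteDimensional ℝ (E ⧸ LinearMap.ker (A.mkQ.prod B.mkQ)) := e.symm.finiteDimensional
  rwa [hker] at this

lemma fd_quot_biInf {α : Type*} (s : Finset α) (f : α → Submodule ℝ E)
    (hf : ∀ a, FiniteDimensional ℝ (E ⧸ f a)) :
    FiniteDimensional ℝ (E ⧸ ⨅ a ∈ s, f a) := by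
  classical
  induction s using Finset.induction with
  | empty =>
      have : (⨅ a ∈ (∅ : Finset α), f a) = ⊤ := by simp
      rw [this]
      exact quot_top_fd
  | insert a s' hx ih =>
      have : (⨅ b ∈ insert a s', f b) = f a ⊓ ⨅ b ∈ s', f b := by
        rw [show (insert a s' : Finset α) = ({a} ∪ s' : Finset α) from rfl]
        simp [iInf_or, iInf_inf_eq, iInf_insert]
      rw [this]
      exact fd_quot_inf _ _ (hf a) ih

lemma isClosed_biInf' {α : Type*} (s : Finset α) (f : α → Submodule ℝ E)
    (hf : ∀ a, IsClosed ((f a : Set E))) :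
    IsClosed ((⨅ a ∈ s, f a : Submodule ℝ E) : Set E) := by
  have : ((⨅ a ∈ s, f a : Submodule ℝ E) : Set E) = ⋂ a ∈ s, (f a : Set E) := by
    simp [Submodule.coe_iInf]
  rw [this]
  exact isClosed_biInter fun a _ => hf a

end Aux

theorem stmt1 {E : Type*} [NormedAddCommGroup E] [NormedSpace ℝ E] [CompleteSpace E]
    (hinf : ¬ FiniteDimensional ℝ E)
    {ι : Type*} [Preorder ι] [IsDirected ι (· ≤ ·)] [Nonempty ι]
    (x : ι → E) (K : Set E) (hKcpt : IsCompact K) (hKball : K ⊆ Metric.closedBall 0 1)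
    (hxK : ∀ α, x α ∈ K) (w : ι → E)
    (hbdd : ∃ M : ℝ, ∀ α, ‖w α‖ ≤ M)
    (hwnull : ∀ f : E →L[ℝ] ℝ, Tendsto (fun α => f (w α)) atTop (nhds 0)) :
    limsup (fun α => ‖x α + w α‖) atTop ≤
      1 + asympRho E (limsup (fun α => ‖w α‖) atTop) := by
  classical
  obtain ⟨M, hM⟩ := hbdd
  haveI : Nontrivial E := by
    by_contra hcon
    rw [not_nontrivial_iff_subsingleton] at hcon
    exact hinf inferInstance
  set t := limsup (fun α => ‖w α‖) atTop with hts
  have hbw : IsBoundedUnder (· ≤ ·) atTop (fun α => ‖w α‖) :=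
    ⟨M, Filter.eventually_map.2 (Eventually.of_forall hM)⟩
  have ht0 : 0 ≤ t :=
    le_limsup_of_frequently_le (Frequently.of_forall fun α => norm_nonneg _) hbw
  have key : ∀ ε : ℝ, 0 < ε → ε ≤ 1 →
      limsup (fun α => ‖x α + w α‖) atTop ≤ 1 + asympRho E t + 6 * ε := by
    intro ε hε hε1
    obtain ⟨u, hu⟩ := exists_norm_eq E zero_le_one
    have hu0 : u ≠ 0 := by
      intro h; rw [h, norm_zero] at hu; exact one_ne_zero hu.symm
    -- finite cover of K by ε-balls centered in K
    obtain ⟨b', hb'sub, hb'fin, hcov⟩ := hKcpt.elim_finite_subcover_image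
      (fun y (_ : y ∈ K) => Metric.isOpen_ball (x := y) (ε := ε))
      (fun z hz => Set.mem_iUnion₂.mpr ⟨z, hz, Metric.mem_ball_self hε⟩)
    set D : Finset E := hb'fin.toFinset with hD
    -- perturbed centers and unit vectors
    set z : E → E := fun y => if y = 0 then ε • u else y with hz
    have hz_ne : ∀ y, z y ≠ 0 := by
      intro y
      by_cases h : y = 0
      · simp only [hz, h, if_pos rfl]
        exact smul_ne_zero (ne_of_gt hε) hu0
      · simp [hz, h]
    have hz_norm : ∀ y ∈ K, ‖z y‖ ≤ 1 := by
      intro y hy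
      by_cases h : y = 0
      · simp only [hz, h, if_pos rfl, norm_smul, Real.norm_eq_abs, abs_of_pos hε, hu, mul_one]
        exact hε1
      · simp only [hz, if_neg h]
        have := hKball hy
        rwa [Metric.mem_closedBall, dist_zero_right] at this
    have hyz : ∀ y, ‖y - z y‖ ≤ ε := by
      intro y
      by_cases h : y = 0
      · simp only [hz, h, if_pos rfl, zero_sub, norm_neg, norm_smul, Real.norm_eq_abs,
          abs_of_pos hε, hu, mul_one, le_refl]
      · simp [hz, h, hε.le]
    set xu : E → E := fun y => ‖z y‖⁻¹ • z y with hxu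
    have hxu1 : ∀ y, ‖xu y‖ = 1 := fun y => norm_smul_inv_norm (hz_ne y)
    -- choose good subspaces
    have hchoice : ∀ y : E, ∃ H : Submodule ℝ E, IsClosed (H : Set E) ∧
        FiniteDimensional ℝ (E ⧸ H) ∧
        ∀ h ∈ H, ‖h‖ ≤ t → ‖xu y + h‖ ≤ 1 + asympRho E t + ε :=
      fun y => exists_H ht0 hε (hxu1 y)
    choose Hy hHc hHfd hHb using hchoice
    set Hbig : Submodule ℝ E := ⨅ y ∈ D, Hy y with hHbig
    obtain ⟨g, hgH, hgtend⟩ :=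
      key_proj Hbig (isClosed_biInf' D Hy hHc) (fd_quot_biInf D Hy hHfd) w hwnull
    have hev2 : ∀ᶠ α in atTop, ‖g α‖ < ε := by
      have := Metric.tendsto_nhds.mp hgtend ε hε
      simp only [dist_zero_right] at this
      exact this
    have hev1 : ∀ᶠ α in atTop, ‖w α‖ < t + ε :=
      eventually_lt_of_limsup_lt (by rw [← hts]; linarith) hbw
    refine limsup_le_of_le (isCoboundedUnder_le_of_le atTop fun α => norm_nonneg _) ?_
    filter_upwards [hev1, hev2] with α h1 h2
    obtain ⟨y, hyb', hxball⟩ := Set.mem_iUnion₂.mp (hcov (hxK α))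
    have hyD : y ∈ D := hb'fin.mem_toFinset.mpr hyb'
    have hyK : y ∈ K := hb'sub hyb'
    set hα : E := w α - g α with hhα
    have hαmem : hα ∈ Hy y := by
      have hle : Hbig ≤ Hy y := iInf₂_le y hyD
      exact hle (hgH α)
    have hαnorm : ‖hα‖ ≤ t + 2 * ε := by
      calc ‖w α - g α‖ ≤ ‖w α‖ + ‖g α‖ := norm_sub_le _ _
        _ ≤ t + 2 * ε := by linarith
    have htpos : 0 < t + 2 * ε := by linarith
    set c : ℝ := t / (t + 2 * ε) with hc
    have hc0 : 0 ≤ c := div_nonneg ht0 htpos.le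
    have hc1 : c ≤ 1 := (div_le_one htpos).mpr (by linarith)
    set h' : E := c • hα with hh'
    have h'mem : h' ∈ Hy y := (Hy y).smul_mem c hαmem
    have h'norm : ‖h'‖ ≤ t := by
      rw [hh', norm_smul, Real.norm_eq_abs, abs_of_nonneg hc0]
      calc c * ‖hα‖ ≤ c * (t + 2 * ε) := mul_le_mul_of_nonneg_left hαnorm hc0
        _ = t := by rw [hc]; field_simp
    have hd1 : ‖xu y + h'‖ ≤ 1 + asympRho E t + ε := hHb y h' h'mem h'norm
    have hd2 : ‖xu y - h'‖ ≤ 1 + asympRho E t + ε := by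
      have := hHb y (-h') ((Hy y).neg_mem h'mem) (by rwa [norm_neg])
      rwa [← sub_eq_add_neg] at this
    have hdiff : ‖hα - h'‖ ≤ 2 * ε := by
      have hαh' : hα - h' = (1 - c) • hα := by rw [hh', sub_smul, one_smul]
      rw [hαh', norm_smul, Real.norm_eq_abs, abs_of_nonneg (by linarith)]
      calc (1 - c) * ‖hα‖ ≤ (1 - c) * (t + 2 * ε) :=
            mul_le_mul_of_nonneg_left hαnorm (by linarith)
        _ = 2 * ε := by rw [hc]; field_simp; ring
    have hB1 : ‖xu y + hα‖ ≤ 1 + asympRho E t + 3 * ε := by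
      calc ‖xu y + hα‖ = ‖(xu y + h') + (hα - h')‖ := by rw [show xu y + hα =
            (xu y + h') + (hα - h') by abel]
        _ ≤ ‖xu y + h'‖ + ‖hα - h'‖ := norm_add_le _ _
        _ ≤ 1 + asympRho E t + 3 * ε := by linarith
    have hB2 : ‖xu y - hα‖ ≤ 1 + asympRho E t + 3 * ε := by
      calc ‖xu y - hα‖ = ‖(xu y - h') + (h' - hα)‖ := by rw [show xu y - hα =
            (xu y - h') + (h' - hα) by abel]
        _ ≤ ‖xu y - h'‖ + ‖h' - hα‖ := norm_add_le _ _
        _ ≤ 1 + asympRho E t + 3 * ε := by rw [norm_sub_rev h' hα]; linarith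
    -- convexity
    have hd0 : 0 < ‖z y‖ := norm_pos_iff.mpr (hz_ne y)
    have hdle : ‖z y‖ ≤ 1 := hz_norm y hyK
    have hzd : ‖z y‖ • xu y = z y := by
      rw [show xu y = ‖z y‖⁻¹ • z y from rfl, smul_smul, mul_inv_cancel₀ hd0.ne', one_smul]
    have hconv : ‖z y + hα‖ ≤ 1 + asympRho E t + 3 * ε := by
      have hid0 : ∀ (v q : E) (d : ℝ), d • v + q =
          ((1 + d) / 2) • (v + q) + ((1 - d) / 2) • (q - v) := by
        intro v q d; module
      have hid : z y + hα =
          ((1 + ‖z y‖) / 2) • (xu y + hα) + ((1 - ‖z y‖) / 2) • (hα - xu y) := by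
        conv_lhs => rw [← hzd]
        exact hid0 (xu y) hα ‖z y‖
      rw [hid]
      have hn1 : (0:ℝ) ≤ (1 + ‖z y‖) / 2 := by linarith
      have hn2 : (0:ℝ) ≤ (1 - ‖z y‖) / 2 := by linarith
      calc ‖((1 + ‖z y‖) / 2) • (xu y + hα) + ((1 - ‖z y‖) / 2) • (hα - xu y)‖
          ≤ ‖((1 + ‖z y‖) / 2) • (xu y + hα)‖ + ‖((1 - ‖z y‖) / 2) • (hα - xu y)‖ :=
            norm_add_le _ _
        _ = (1 + ‖z y‖) / 2 * ‖xu y + hα‖ + (1 - ‖z y‖) / 2 * ‖hα - xu y‖ := by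
            rw [norm_smul, norm_smul, Real.norm_eq_abs, Real.norm_eq_abs,
              abs_of_nonneg hn1, abs_of_nonneg hn2]
        _ ≤ (1 + ‖z y‖) / 2 * (1 + asympRho E t + 3 * ε) +
              (1 - ‖z y‖) / 2 * (1 + asympRho E t + 3 * ε) := by
            have hB2' : ‖hα - xu y‖ ≤ 1 + asympRho E t + 3 * ε := by
              rw [norm_sub_rev]; exact hB2
            exact add_le_add (mul_le_mul_of_nonneg_left hB1 hn1)
              (mul_le_mul_of_nonneg_left hB2' hn2)
        _ = 1 + asympRho E t + 3 * ε := by ring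
    -- final chain
    have e1 : ‖x α - y‖ ≤ ε := by
      have := hxball
      rw [Metric.mem_ball, dist_eq_norm] at this
      exact this.le
    have e2 : ‖y - z y‖ ≤ ε := hyz y
    have e3 : ‖w α - hα‖ ≤ ε := by
      rw [hhα, sub_sub_cancel]
      exact h2.le
    have hfin : x α + w α = (z y + hα) + ((x α - y) + ((y - z y) + (w α - hα))) := by abel
    calc ‖x α + w α‖ = ‖(z y + hα) + ((x α - y) + ((y - z y) + (w α - hα)))‖ := by
          rw [← hfin]
      _ ≤ ‖z y + hα‖ + (‖x α - y‖ + (‖y - z y‖ + ‖w α - hα‖)) := by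
          have i1 := norm_add_le (z y + hα) ((x α - y) + ((y - z y) + (w α - hα)))
          have i2 := norm_add_le (x α - y) ((y - z y) + (w α - hα))
          have i3 := norm_add_le (y - z y) (w α - hα)
          linarith
      _ ≤ 1 + asympRho E t + 6 * ε := by linarith
  refine le_of_forall_pos_le_add fun δ hδ => ?_
  have hmin : 0 < min (δ / 6) 1 := lt_min (by linarith) one_pos
  have hk := key (min (δ / 6) 1) hmin (min_le_right _ _)
  have h6 : 6 * min (δ / 6) 1 ≤ δ := by
    have := min_le_left (δ / 6) 1
    linarith
  calc limsup (fun α => ‖x α + w α‖) atTop ≤ 1 + asympRho E t + 6 * min (δ / 6) 1 := hk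
    _ ≤ 1 + asympRho E t + δ := by linarith
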